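/- Let K be a field with a nonarchimedean multiplicative norm ‖·‖ : K → ℝ≥0 whose value group is all of ℝ_{>0} (for every real r > 0 there exists x ∈ K with ‖x‖ = r). Let K° = {x ∈ K : ‖x‖ ≤ 1} and 𝔪 = {x ∈ K : ‖x‖ < 1}. Let M ⊆ K be a nonzero K°-submodule of K that is bounded (there is C > 0 with ‖m‖ ≤ C for all m ∈ M) and satisfies 𝔪·M = M. Then there exists r > 0 such that M = {x ∈ K : ‖x‖ < r}; equivalently, there exists a nonzero k₀ ∈ K with M = k₀·𝔪, so M is isomorphic to 𝔪 as a K°-module. -/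

import Mathlib

/-- The maximal ideal `𝔪 = {x : ‖x‖ < 1}` of the valuation ring `K° = {x : ‖x‖ ≤ 1}`. -/
def maxIdeal {K : Type*} [Field K] (v : Valuation K NNReal) : Ideal v.integer where
  carrier := {x : v.integer | v (x : K) < 1}
  add_mem' := fun {a b} ha hb => lt_of_le_of_lt (v.map_add _ _) (max_lt ha hb)
  zero_mem' := by simp
  smul_mem' := fun c x hx => by
    have hc : v (c : K) ≤ 1 := c.2
    show v ((c * x : v.integer) : K) < 1
    calc v ((c * x : v.integer) : K) = v (c : K) * v (x : K) := by
          push_cast; exact v.map_mul _ _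
      _ ≤ 1 * v (x : K) := mul_le_mul_of_nonneg_right hc zero_le
      _ = v (x : K) := one_mul _
      _ < 1 := hx

/-- Let `K` be a field with a nonarchimedean multiplicative norm whose value group is all
of `ℝ_{>0}`.  Let `M ⊆ K` be a nonzero bounded `K°`-submodule of `K` with `𝔪 • M = M`.
Then `M = {x : K | v x < r}` for some `r > 0`. -/
theorem bounded_almost_free_submodule_eq_ball (K : Type*) [Field K]
    (v : Valuation K NNReal)
    (hsurj : ∀ r : NNReal, 0 < r → ∃ x : K, v x = r)
    (M : Submodule v.integer K) (hM : M ≠ ⊥)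
    (hbdd : ∃ C : NNReal, 0 < C ∧ ∀ m ∈ M, v m ≤ C)
    (hsmul : maxIdeal v • M = M) :
    ∃ r : NNReal, 0 < r ∧ (M : Set K) = {x : K | v x < r} := by
  obtain ⟨C, hC, hCle⟩ := hbdd
  set S : Set NNReal := v '' (M : Set K) with hS
  have hSne : S.Nonempty := ⟨v 0, 0, M.zero_mem, rfl⟩
  have hSbdd : BddAbove S := ⟨C, fun s ⟨m, hm, hms⟩ => hms ▸ hCle m hm⟩
  set r : NNReal := sSup S with hr
  -- r > 0
  obtain ⟨m₀, hm₀M, hm₀⟩ := Submodule.exists_mem_ne_zero_of_ne_bot hM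
  have hvm₀ : 0 < v m₀ := by
    simpa [pos_iff_ne_zero] using (Valuation.ne_zero_iff v).2 hm₀
  have hrpos : 0 < r := lt_of_lt_of_le hvm₀ (le_csSup hSbdd ⟨m₀, hm₀M, rfl⟩)
  refine ⟨r, hrpos, Set.Subset.antisymm ?_ ?_⟩
  · intro m hm
    have hm' : m ∈ maxIdeal v • M := by rw [hsmul]; exact hm
    refine Submodule.smul_induction_on hm' ?_ ?_
    · intro a ha n hn
      have hva : v (a : K) < 1 := ha
      have hvn : v n ≤ r := le_csSup hSbdd ⟨n, hn, rfl⟩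
      have hsm : ((a : v.integer) • n : K) = (a : K) * n := rfl
      show v ((a : v.integer) • n) < r
      rw [hsm, v.map_mul]
      rcases eq_or_lt_of_le (zero_le : 0 ≤ v n) with h0 | h0
      · rw [← h0, mul_zero]; exact hrpos
      · calc v (a : K) * v n < 1 * v n := mul_lt_mul_of_pos_right hva h0
          _ = v n := one_mul _
          _ ≤ r := hvn
    · intro x y hx hy
      exact lt_of_le_of_lt (v.map_add x y) (max_lt hx hy)
  · intro x hx
    rcases eq_or_ne x 0 with rfl | hx0
    · exact M.zero_mem
    obtain ⟨s, ⟨m, hmM, rfl⟩, hlt⟩ := exists_lt_of_lt_csSup hSne hx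
    have hm0 : m ≠ 0 := by
      intro h
      rw [h, v.map_zero] at hlt
      exact not_lt_of_ge zero_le hlt
    have hvm : 0 < v m := by
      simpa [pos_iff_ne_zero] using (Valuation.ne_zero_iff v).2 hm0
    have hc : v (x * m⁻¹) ≤ 1 := by
      rw [v.map_mul, map_inv₀]
      rw [mul_inv_le_iff₀ hvm, one_mul]
      exact le_of_lt hlt
    have : (⟨x * m⁻¹, hc⟩ : v.integer) • m ∈ M := M.smul_mem _ hmM
    have heq : (⟨x * m⁻¹, hc⟩ : v.integer) • m = x := by
      show x * m⁻¹ * m = x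
      field_simp
    rwa [heq] at this
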